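/- For the EWL approach to the Battle of the Sexes game with payoff bimatrix rows ((4,2),(0,0)) and ((0,0),(2,4)), the strategy profile (U(0,π/8,0), U(0,π/8,0)) yields the payoff vector (3,3), which lies outside the noncooperative payoff region: there is no pair of probabilities (p,q) ∈ [0,1]² with (4pq, 2pq) + (2(1−p)(1−q), 4(1−p)(1−q)) = (3,3). -/
import Mathlib


open Real

/-- The EWL payoff vector for a 2×2 bimatrix game with payoff vectors
`P00 P01 P10 P11 : ℝ × ℝ`, at the profile `(U(θ1,α1,β1), U(θ2,α2,β2))`. -/
noncomputable def ewlV (P00 P01 P10 P11 : ℝ × ℝ) (θ1 α1 β1 θ2 α2 β2 : ℝ) : ℝ × ℝ :=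
  ((cos (α1 + α2) * cos (θ1/2) * cos (θ2/2) +
    sin (β1 + β2) * sin (θ1/2) * sin (θ2/2))^2) • P00 +
  ((sin (α2 - β1) * sin (θ1/2) * cos (θ2/2) +
    cos (α1 - β2) * cos (θ1/2) * sin (θ2/2))^2) • P01 +
  ((cos (α2 - β1) * sin (θ1/2) * cos (θ2/2) +
    sin (α1 - β2) * cos (θ1/2) * sin (θ2/2))^2) • P10 +
  ((cos (β1 + β2) * sin (θ1/2) * sin (θ2/2) -
    sin (α1 + α2) * cos (θ1/2) * cos (θ2/2))^2) • P11

/-- In the EWL approach to Battle of the Sexes, the profile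
`(U(0,π/8,0), U(0,π/8,0))` yields the payoff vector `(3,3)`, which is not in
the noncooperative payoff region. -/
theorem ewl_bos_outside_noncooperative :
    ewlV (4, 2) (0, 0) (0, 0) (2, 4) 0 (π/8) 0 0 (π/8) 0 = (3, 3) ∧
    ¬ ∃ p q : ℝ, p ∈ Set.Icc (0:ℝ) 1 ∧ q ∈ Set.Icc (0:ℝ) 1 ∧
        ((4 * (p * q), 2 * (p * q)) : ℝ × ℝ) +
          (2 * ((1 - p) * (1 - q)), 4 * ((1 - p) * (1 - q))) = (3, 3) := by
  constructor
  · have h8 : π/8 + π/8 = π/4 := by ring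
    simp only [ewlV, Real.sin_zero, Real.cos_zero, h8]
    have hc : Real.cos (π/4) = Real.sqrt 2 / 2 := Real.cos_pi_div_four
    have hs : Real.sin (π/4) = Real.sqrt 2 / 2 := Real.sin_pi_div_four
    have h2 : Real.sqrt 2 ^ 2 = 2 := Real.sq_sqrt (by norm_num)
    rw [hc, hs]
    norm_num [Prod.ext_iff, Prod.smul_def, smul_eq_mul]
    constructor <;> nlinarith [h2]
  · rintro ⟨p, q, ⟨hp0, hp1⟩, ⟨hq0, hq1⟩, h⟩
    rw [Prod.ext_iff] at h
    obtain ⟨h1, h2⟩ := h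
    simp only [Prod.fst_add, Prod.snd_add] at h1 h2
    have hpq : p * q = 1/2 := by linarith
    have hpq' : (1-p) * (1-q) = 1/2 := by linarith
    nlinarith [mul_nonneg hp0 hq0, sq_nonneg (p-q), sq_nonneg (p+q-1)]
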